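/- Let C* ⊂ ℝⁿ be the dual cone of future-directed causal covectors for the Minkowski metric η = diag(-1,1,...,1), and L(v) = -|v|_η^{1/2} for future-directed causal v. Then for any p in the interior of C*, the supremum H(p) = sup_v {⟨p,v⟩ - L(v)} is attained at an interior point of the causal cone, and H(p) = 1/(4|p|_η), where |p|_η is the Minkowski norm of the vector dual to p. -/
import Mathlib


/- STATEMENT 3: Minkowski space (ℝ^{n+1}, η), η = diag(-1,1,...,1).  For a covector p in
the interior of the dual causal cone, i.e. p = η(w,·) with w future timelike, the
Legendre-Fenchel supremum H(p) = sup_v {p(v) - L(v)} (where L(v) = -|v|_η^{1/2} on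
future causal v, +∞ otherwise, so the sup is over causal v of p(v) + |v|_η^{1/2})
is attained at an interior (timelike) point of the causal cone and equals
1/(4|p|_η) = 1/(4|w|_η). -/

/-- The Minkowski inner product of signature (-,+,...,+) on ℝ^{n+1}. -/
def mink {n : ℕ} (v w : Fin (n+1) → ℝ) : ℝ :=
  (∑ i, v i * w i) - 2 * (v 0 * w 0)

/-- Future-directed causal vectors. -/
def IsCausalVec {n : ℕ} (v : Fin (n+1) → ℝ) : Prop :=
  mink v v ≤ 0 ∧ 0 ≤ v 0

lemma mink_eq {n : ℕ} (v w : Fin (n+1) → ℝ) :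
    mink v w = (∑ i : Fin n, v i.succ * w i.succ) - v 0 * w 0 := by
  simp [mink, Fin.sum_univ_succ]; ring

lemma mink_smul_right {n : ℕ} (v w : Fin (n+1) → ℝ) (t : ℝ) :
    mink v (fun i => t * w i) = t * mink v w := by
  simp only [mink]
  rw [show (∑ i, v i * (t * w i)) = t * ∑ i, v i * w i from by
    rw [Finset.mul_sum]; exact Finset.sum_congr rfl fun i _ => by ring]
  ring

lemma mink_smul_left {n : ℕ} (v w : Fin (n+1) → ℝ) (t : ℝ) :
    mink (fun i => t * v i) w = t * mink v w := by
  simp only [mink]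
  rw [show (∑ i, t * v i * w i) = t * ∑ i, v i * w i from by
    rw [Finset.mul_sum]; exact Finset.sum_congr rfl fun i _ => by ring]
  ring

/-- Reverse Cauchy–Schwarz for the Minkowski form. -/
lemma mink_reverse_cs {n : ℕ} (w u : Fin (n+1) → ℝ)
    (hw : mink w w < 0) (hw0 : 0 < w 0) (hu : mink u u ≤ 0) (hu0 : 0 ≤ u 0) :
    mink w u ≤ -Real.sqrt ((-(mink w w)) * (-(mink u u))) := by
  have hWU := mink_eq w u
  have hWW := mink_eq w w
  have hUU := mink_eq u u
  set Swu := ∑ i : Fin n, w i.succ * u i.succ with hSwu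
  set Sww := ∑ i : Fin n, w i.succ * w i.succ with hSww
  set Suu := ∑ i : Fin n, u i.succ * u i.succ with hSuu
  have hSww0 : 0 ≤ Sww := Finset.sum_nonneg fun i _ => mul_self_nonneg _
  have hSuu0 : 0 ≤ Suu := Finset.sum_nonneg fun i _ => mul_self_nonneg _
  have hcs : Swu ^ 2 ≤ Sww * Suu := by
    have := Finset.sum_mul_sq_le_sq_mul_sq Finset.univ
      (fun i : Fin n => w i.succ) (fun i : Fin n => u i.succ)
    simpa [hSwu, hSww, hSuu, sq] using this
  set P := Real.sqrt Sww with hP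
  set Q := Real.sqrt Suu with hQ
  have hP2 : P ^ 2 = Sww := Real.sq_sqrt hSww0
  have hQ2 : Q ^ 2 = Suu := Real.sq_sqrt hSuu0
  have hPn : 0 ≤ P := Real.sqrt_nonneg _
  have hQn : 0 ≤ Q := Real.sqrt_nonneg _
  have hPw : P < w 0 := by nlinarith [hWW, hw]
  have hQu : Q ≤ u 0 := by nlinarith [hUU, hu]
  have hSwuPQ : Swu ≤ P * Q := by
    have h1 : Swu ^ 2 ≤ (P * Q) ^ 2 := by rw [mul_pow, hP2, hQ2]; exact hcs
    have h2 : 0 ≤ P * Q := mul_nonneg hPn hQn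
    nlinarith [h1, h2]
  have h1 : mink w u ≤ P * Q - w 0 * u 0 := by rw [hWU]; linarith
  have h2 : 0 ≤ w 0 * u 0 - P * Q := by nlinarith
  have hkey : (-(mink w w)) * (-(mink u u)) ≤ (w 0 * u 0 - P * Q) ^ 2 := by
    rw [hWW, hUU, ← hP2, ← hQ2]
    nlinarith [sq_nonneg (P * u 0 - Q * w 0)]
  have hsq : Real.sqrt ((-(mink w w)) * (-(mink u u))) ≤ w 0 * u 0 - P * Q := by
    have := Real.sqrt_le_sqrt hkey
    rwa [Real.sqrt_sq h2] at this
  linarith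

theorem stmt_3 {n : ℕ} (w : Fin (n+1) → ℝ)
    (hw : mink w w < 0) (hw0 : 0 < w 0) :   -- p := η(w,·) lies in int(C*)
    ∃ v : Fin (n+1) → ℝ,
      (mink v v < 0 ∧ 0 < v 0) ∧            -- v interior to the causal cone
      mink w v + Real.sqrt (Real.sqrt |mink v v|)
        = 1 / (4 * Real.sqrt (-(mink w w))) ∧
      ∀ u : Fin (n+1) → ℝ, IsCausalVec u →
        mink w u + Real.sqrt (Real.sqrt |mink u u|)
          ≤ 1 / (4 * Real.sqrt (-(mink w w))) := by
  set c := Real.sqrt (-(mink w w)) with hc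
  have hc0 : 0 < c := Real.sqrt_pos.mpr (by linarith)
  have hcsq : c ^ 2 = -(mink w w) := Real.sq_sqrt (by linarith)
  have hmw : mink w w = -c ^ 2 := by linarith
  set t : ℝ := 1 / (4 * c ^ 3) with ht
  have ht0 : 0 < t := by positivity
  refine ⟨fun i => t * w i, ?_, ?_, ?_⟩
  · constructor
    · rw [mink_smul_left, mink_smul_right]
      nlinarith [mul_pos ht0 ht0, hw]
    · exact mul_pos ht0 hw0
  · have hvv : mink (fun i => t * w i) (fun i => t * w i) = t ^ 2 * mink w w := by
      rw [mink_smul_left, mink_smul_right]; ring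
    rw [mink_smul_right, hvv]
    have habs : |t ^ 2 * mink w w| = (t * c) ^ 2 := by
      rw [abs_of_nonpos (mul_nonpos_of_nonneg_of_nonpos (sq_nonneg t) hw.le), hmw]
      ring
    rw [habs, Real.sqrt_sq (by positivity)]
    have htc : t * c = (1 / (2 * c)) ^ 2 := by
      rw [ht]; field_simp; ring
    rw [htc, Real.sqrt_sq (by positivity)]
    rw [hmw, ht]
    field_simp
    ring
  · rintro u ⟨hu, hu0⟩
    have hrcs := mink_reverse_cs w u hw hw0 hu hu0
    set s := Real.sqrt (-(mink u u)) with hs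
    have hs0 : 0 ≤ s := Real.sqrt_nonneg _
    have hssq : s ^ 2 = -(mink u u) := Real.sq_sqrt (by linarith)
    have hmul : Real.sqrt ((-(mink w w)) * (-(mink u u))) = c * s := by
      rw [Real.sqrt_mul (by linarith : (0:ℝ) ≤ -(mink w w)), ← hc, ← hs]
    have habs : |mink u u| = -(mink u u) := abs_of_nonpos hu
    rw [habs, ← hs]
    have h1 : mink w u ≤ -(c * s) := by rw [← hmul]; exact hrcs
    have hr : Real.sqrt s - c * s ≤ 1 / (4 * c) := by
      rw [le_div_iff₀ (by positivity)]
      have hrs : Real.sqrt s ^ 2 = s := Real.sq_sqrt hs0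
      nlinarith [sq_nonneg (2 * c * Real.sqrt s - 1), Real.sqrt_nonneg s]
    linarith
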